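/- Purified random oracle unpredictability: for the purified random oracle with database register D = ⊗_x D_x each of κ qubits initialized to |+^κ⟩, define EqualH(x) = Σ_{y∈{0,1}^κ} |y⟩⟨y|^L ⊗ |y⟩⟨y|^{D_x} and Has_{x} = I − |+^κ⟩⟨+^κ|^{D_x} (tensored with identity on other entries). Then ‖EqualH(x)·(I − Has_{x})‖_op = 2^{−κ/2}. -/
import Mathlib


/-- The ℓ²→ℓ² operator norm of a complex matrix. -/
noncomputable def opNorm {m n : Type*} [Fintype m] [Fintype n] [DecidableEq n]
    (A : Matrix m n ℂ) : ℝ :=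
  ‖LinearMap.toContinuousLinearMap (Matrix.toEuclideanLin A)‖

/-- The projector `EqualH(x) = Σ_{y∈{0,1}^κ} |y⟩⟨y|^L ⊗ |y⟩⟨y|^{D_x}` on registers
`(L, D_x)`. -/
def equalH (κ : ℕ) : Matrix ((Fin κ → Fin 2) × (Fin κ → Fin 2))
    ((Fin κ → Fin 2) × (Fin κ → Fin 2)) ℂ :=
  Matrix.of fun p q => if p = q ∧ p.1 = p.2 then 1 else 0

/-- The projector `I − Has_x = I^L ⊗ |+^κ⟩⟨+^κ|^{D_x}`.  Its `D_x`-entries are all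
`2^{−κ}`. -/
noncomputable def idTensPlus (κ : ℕ) : Matrix ((Fin κ → Fin 2) × (Fin κ → Fin 2))
    ((Fin κ → Fin 2) × (Fin κ → Fin 2)) ℂ :=
  Matrix.of fun p q => (if p.1 = q.1 then 1 else 0) * ((2 : ℂ) ^ κ)⁻¹

open Matrix
open scoped Matrix.Norms.L2Operator

lemma sum_fst_ite (κ : ℕ) (p1 : Fin κ → Fin 2) (c : ℂ) :
    (∑ r : (Fin κ → Fin 2) × (Fin κ → Fin 2), if r.1 = p1 then c else 0)
      = (2:ℂ)^κ * c := by
  rw [Fintype.sum_prod_type]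
  rw [show (∑ x : Fin κ → Fin 2, ∑ _y : Fin κ → Fin 2, if x = p1 then c else 0)
      = ∑ x : Fin κ → Fin 2, (Fintype.card (Fin κ → Fin 2)) • (if x = p1 then c else 0) from
    Finset.sum_congr rfl fun x _ => by rw [Finset.sum_const, Finset.card_univ]]
  simp [smul_ite, Finset.sum_ite_eq', Fintype.card_fun, mul_comm]

lemma mul_eq (κ : ℕ) : equalH κ * idTensPlus κ =
    Matrix.of fun p q => (if p.1 = p.2 ∧ p.1 = q.1 then 1 else 0) * ((2 : ℂ) ^ κ)⁻¹ := by
  ext p q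
  simp only [Matrix.mul_apply, equalH, idTensPlus, Matrix.of_apply]
  rw [Finset.sum_eq_single p]
  · by_cases h1 : p.1 = p.2 <;> by_cases h2 : p.1 = q.1 <;> simp [h1, h2]
  · intro b _ hb
    simp [Ne.symm hb]
  · simp

lemma star_mul_eq (κ : ℕ) :
    (equalH κ * idTensPlus κ)ᴴ * (equalH κ * idTensPlus κ)
      = ((2 : ℂ) ^ κ)⁻¹ • idTensPlus κ := by
  rw [mul_eq]
  ext q q'
  simp only [Matrix.mul_apply, Matrix.conjTranspose_apply, Matrix.of_apply, Matrix.smul_apply,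
    idTensPlus, smul_eq_mul]
  rw [Finset.sum_eq_single ((q.1, q.1) : (Fin κ → Fin 2) × (Fin κ → Fin 2))]
  · by_cases h : q.1 = q'.1 <;> simp [h]
  · intro b _ hb
    have : ¬ (b.1 = b.2 ∧ b.1 = q.1) := by
      rintro ⟨h1, h2⟩
      exact hb (by rw [Prod.ext_iff]; exact ⟨h2, h1 ▸ h2⟩)
    simp [this]
  · simp

lemma idTensPlus_sq (κ : ℕ) : idTensPlus κ * idTensPlus κ = idTensPlus κ := by
  ext p q
  simp only [Matrix.mul_apply, idTensPlus, Matrix.of_apply]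
  rw [Finset.sum_congr rfl (fun r _ => by
    rw [show (if p.1 = r.1 then (1:ℂ) else 0) * (2 ^ κ)⁻¹ *
        ((if r.1 = q.1 then 1 else 0) * (2 ^ κ)⁻¹)
      = (if p.1 = r.1 ∧ r.1 = q.1 then ((2:ℂ)^κ)⁻¹ * (2 ^ κ)⁻¹ else 0) from by
        by_cases h1 : p.1 = r.1 <;> by_cases h2 : r.1 = q.1 <;> simp [h1, h2]])]
  by_cases h : p.1 = q.1
  · have hcond : ∀ r : (Fin κ → Fin 2) × (Fin κ → Fin 2),
        (if p.1 = r.1 ∧ r.1 = q.1 then ((2:ℂ)^κ)⁻¹ * (2 ^ κ)⁻¹ else 0)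
          = if r.1 = p.1 then ((2:ℂ)^κ)⁻¹ * (2 ^ κ)⁻¹ else 0 := by
      intro r
      by_cases hr : r.1 = p.1 <;> simp [hr, ← h, eq_comm]
    rw [Finset.sum_congr rfl (fun r _ => hcond r), sum_fst_ite]
    have hne : ((2:ℂ)^κ) ≠ 0 := pow_ne_zero κ two_ne_zero
    rw [if_pos h]
    field_simp
  · rw [Finset.sum_eq_zero, if_neg h, zero_mul]
    intro r _
    rw [if_neg]
    rintro ⟨h1, h2⟩
    exact h (h1.trans h2)

lemma idTensPlus_herm (κ : ℕ) : (idTensPlus κ)ᴴ = idTensPlus κ := by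
  ext p q
  simp only [Matrix.conjTranspose_apply, idTensPlus, Matrix.of_apply, star_mul', star_inv₀]
  by_cases h : p.1 = q.1 <;> simp [h, eq_comm]

lemma idTensPlus_norm (κ : ℕ) : ‖idTensPlus κ‖ = 1 := by
  have h1 : ‖(idTensPlus κ)ᴴ * idTensPlus κ‖ = ‖idTensPlus κ‖ * ‖idTensPlus κ‖ :=
    Matrix.l2_opNorm_conjTranspose_mul_self _
  rw [idTensPlus_herm, idTensPlus_sq] at h1
  have hne : idTensPlus κ ≠ 0 := by
    intro h
    have := congrFun (congrFun h ⟨fun _ => 0, fun _ => 0⟩) ⟨fun _ => 0, fun _ => 0⟩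
    simp [idTensPlus] at this
  have hnn : ‖idTensPlus κ‖ ≠ 0 := by simpa using hne
  have h3 : ‖idTensPlus κ‖ * 1 = ‖idTensPlus κ‖ * ‖idTensPlus κ‖ := by rw [mul_one]; exact h1
  exact (mul_left_cancel₀ hnn h3).symm

/-- **purified random-oracle unpredictability.**
`‖EqualH(x) · (I − Has_x)‖_op = 2^{−κ/2}`. -/
theorem stmt13 (κ : ℕ) :
    opNorm (equalH κ * idTensPlus κ) = (Real.sqrt (2 ^ κ))⁻¹ := by
  have hop : opNorm (equalH κ * idTensPlus κ) = ‖equalH κ * idTensPlus κ‖ := rfl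
  have h1 : ‖(equalH κ * idTensPlus κ)ᴴ * (equalH κ * idTensPlus κ)‖
      = ‖equalH κ * idTensPlus κ‖ * ‖equalH κ * idTensPlus κ‖ :=
    Matrix.l2_opNorm_conjTranspose_mul_self _
  rw [star_mul_eq, norm_smul, idTensPlus_norm, mul_one] at h1
  have h2 : ‖((2:ℂ)^κ)⁻¹‖ = ((2:ℝ)^κ)⁻¹ := by
    rw [norm_inv, norm_pow, Complex.norm_ofNat]
  rw [h2] at h1
  rw [hop]
  have hnn : (0:ℝ) ≤ ‖equalH κ * idTensPlus κ‖ := norm_nonneg _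
  have key : ‖equalH κ * idTensPlus κ‖ = Real.sqrt (((2:ℝ)^κ)⁻¹) := by
    rw [h1, Real.sqrt_mul_self hnn]
  rw [key, Real.sqrt_inv]
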